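/- arXiv:2506.16230 — 2 statements merged into one kernel-verified Lean document; each statement's English description precedes it below -/
import Mathlib

section
/- Fix δ > 0, let φ satisfy the smoothness assumption with φ(x) ~ x log x as x → ∞, and let P₀ be a probability measure on ℝ that is either heavy-tailed with index γ > 1 or has Weibull-type tails with index γ < 1. Let ρ_{1−β} be the tail-weighted risk measure associated with a weight function w for which there exists m > 0 with inf_{t ∈ (0,m)} w(t) > 0. Then for every β ∈ (0,1), ρ_{1−β}(B_{φ,δ}(P₀)) = ∞. -/
open MeasureTheory Filter Set
open scoped ENNReal NNReal Topology Classical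

noncomputable section

/-- `f` is regularly varying at infinity with index `ρ`:
`f (t*x) / f t → x ^ ρ` as `t → ∞` for every `x > 0`.  Slowly varying means index `0`. -/
def RegVary (f : ℝ → ℝ) (ρ : ℝ) : Prop :=
  ∀ x : ℝ, 0 < x → Tendsto (fun t : ℝ => f (t * x) / f t) atTop (𝓝 (x ^ ρ))

/-- Value-at-Risk at level `1 - s`: `v_{1-s}(P) = inf {u | P((u,∞)) ≤ s}`. -/
def VaR (P : Measure ℝ) (s : ℝ) : ℝ :=
  sInf {u : ℝ | P (Ioi u) ≤ ENNReal.ofReal s}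

/-- `w` is a weight function with tail parameters `κ` and slowly varying `ℓ`:
nonnegative on `(0,1]`, integrates to one, and `w(t) ~ t^κ ℓ(1/t)` as `t → 0⁺`. -/
structure IsWeight (w : ℝ → ℝ) (κ : ℝ) (ℓ : ℝ → ℝ) : Prop where
  nonneg : ∀ t ∈ Ioc (0:ℝ) 1, 0 ≤ w t
  total : (∫ t in Ioc (0:ℝ) 1, w t) = 1
  kappa_gt : -1 < κ
  slow : RegVary ℓ 0
  asym : Tendsto (fun t : ℝ => w t / (t ^ κ * ℓ (1 / t))) (𝓝[>] (0:ℝ)) (𝓝 1)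

/-- Tail-weighted risk measure `ρ_{1-β}(P) = ∫₀¹ w(t) v_{1-βt}(P) dt`, `[0,∞]`-valued. -/
def tailRisk (w : ℝ → ℝ) (β : ℝ) (P : Measure ℝ) : ℝ≥0∞ :=
  ∫⁻ t in Ioc (0:ℝ) 1, ENNReal.ofReal (w t * VaR P (β * t))

/-- Worst-case risk over a set of measures. -/
def worstRisk (w : ℝ → ℝ) (β : ℝ) (S : Set (Measure ℝ)) : ℝ≥0∞ :=
  ⨆ P ∈ S, tailRisk w β P

/-- Worst-case Value-at-Risk over a set of measures. -/
def worstVaR (S : Set (Measure ℝ)) (s : ℝ) : ℝ :=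
  ⨆ P ∈ S, VaR P s

/-- Survival function `F̄_P(x) = P((x,∞))`. -/
def survival (P : Measure ℝ) (x : ℝ) : ℝ := (P (Ioi x)).toReal

/-- `P` is heavy-tailed with index `γ`: its survival function is `RV(-γ)`. -/
def HeavyTailed (P : Measure ℝ) (γ : ℝ) : Prop := RegVary (survival P) (-γ)

/-- Cumulative hazard `Λ_P(x) = - log P((x,∞))`. -/
def hazard (P : Measure ℝ) (x : ℝ) : ℝ := - Real.log (survival P x)

/-- `P` has Weibull-type tails with index `γ`: its cumulative hazard is `RV(γ)`. -/
def WeibullTailed (P : Measure ℝ) (γ : ℝ) : Prop := RegVary (hazard P) γ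

/-- Couplings of two measures on `ℝ`. -/
def Couplings (P R : Measure ℝ) : Set (Measure (ℝ × ℝ)) :=
  {π | π.map Prod.fst = P ∧ π.map Prod.snd = R}

/-- `p`-Wasserstein distance. -/
def Wdist (p : ℝ) (P R : Measure ℝ) : ℝ≥0∞ :=
  (⨅ π ∈ Couplings P R, ∫⁻ z : ℝ × ℝ, ENNReal.ofReal (|z.1 - z.2| ^ p) ∂π) ^ (1 / p)

/-- Wasserstein ball of radius `δ` around `P₀`. -/
def WBall (p δ : ℝ) (P₀ : Measure ℝ) : Set (Measure ℝ) :=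
  {P | IsProbabilityMeasure P ∧ Wdist p P P₀ ≤ ENNReal.ofReal δ}

/-- `φ`-divergence `D_φ(P,R)`, equal to `+∞` unless `P ≪ R`. -/
def phiDiv {α : Type*} [MeasurableSpace α] (φ : ℝ → ℝ) (P R : Measure α) : ℝ≥0∞ :=
  if P ≪ R then lintegral R (fun x => ENNReal.ofReal (φ (P.rnDeriv R x).toReal)) else ⊤

/-- `φ`-divergence ball of radius `δ` around `R`. -/
def phiBall {α : Type*} [MeasurableSpace α] (φ : ℝ → ℝ) (δ : ℝ) (R : Measure α) :
    Set (Measure α) :=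
  {P | IsProbabilityMeasure P ∧ phiDiv φ P R ≤ ENNReal.ofReal δ}

/-- The smoothness assumption on `φ`: twice differentiable, convex,
`φ(1) = φ'(1) = 0`, and `φ(x)/x → ∞`. -/
structure PhiSmooth (φ : ℝ → ℝ) : Prop where
  nonneg : ∀ x : ℝ, 0 ≤ x → 0 ≤ φ x
  diff1 : Differentiable ℝ φ
  diff2 : Differentiable ℝ (deriv φ)
  convex : ConvexOn ℝ (Ici 0) φ
  at_one : φ 1 = 0
  deriv_one : deriv φ 1 = 0
  superlinear : Tendsto (fun x : ℝ => φ x / x) atTop atTop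

/-- Conditional Value-at-Risk `C_{1-β}(P) = β⁻¹ ∫₀^β v_{1-s}(P) ds`. -/
def CVaR (β : ℝ) (P : Measure ℝ) : ℝ := β⁻¹ * ∫ s in Ioc (0:ℝ) β, VaR P s



-- ======================= auxiliary lemmas =======================

lemma tendsto_measure_Ioi_zero (μ : Measure ℝ) [IsFiniteMeasure μ] :
    Tendsto (fun x : ℝ => μ (Ioi x)) atTop (𝓝 0) := by
  have h := tendsto_measure_iInter_atTop (μ := μ) (s := fun x : ℝ => Ioi x)
    (fun _ => measurableSet_Ioi.nullMeasurableSet) (fun i j hij => Ioi_subset_Ioi hij)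
    ⟨0, measure_ne_top μ _⟩
  have he : ⋂ n : ℝ, Ioi n = (∅ : Set ℝ) := by
    ext y
    simp only [mem_iInter, mem_Ioi, mem_empty_iff_false, iff_false, not_forall, not_lt]
    exact ⟨y, le_refl y⟩
  rw [he, measure_empty] at h
  exact h

lemma survival_tendsto_zero (μ : Measure ℝ) [IsFiniteMeasure μ] :
    Tendsto (survival μ) atTop (𝓝 0) := by
  have h := (ENNReal.tendsto_toReal (by simp)).comp (tendsto_measure_Ioi_zero μ)
  exact h

lemma survival_antitone (μ : Measure ℝ) [IsFiniteMeasure μ] : Antitone (survival μ) :=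
  fun _ _ hxy => ENNReal.toReal_mono (measure_ne_top _ _) (measure_mono (Ioi_subset_Ioi hxy))

lemma survival_nonneg (μ : Measure ℝ) (x : ℝ) : 0 ≤ survival μ x := ENNReal.toReal_nonneg

lemma measure_Ioi_eq (μ : Measure ℝ) [IsFiniteMeasure μ] (x : ℝ) :
    μ (Ioi x) = ENNReal.ofReal (survival μ x) :=
  (ENNReal.ofReal_toReal (measure_ne_top _ _)).symm

lemma regvary_pos (f : ℝ → ℝ) (ρ : ℝ) (h : RegVary f ρ) (x₀ : ℝ)
    (h0 : ∀ t, x₀ ≤ t → f t = 0) : False := by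
  have h2 := h 2 (by norm_num)
  have hz : Tendsto (fun t : ℝ => f (t * 2) / f t) atTop (𝓝 0) := by
    apply Tendsto.congr' _ tendsto_const_nhds
    filter_upwards [eventually_ge_atTop (max x₀ 0)] with t ht
    have ht0 : x₀ ≤ t := le_trans (le_max_left _ _) ht
    rw [h0 t ht0, div_zero]
  have hun := tendsto_nhds_unique hz h2
  have hpos : (0:ℝ) < (2:ℝ) ^ ρ := Real.rpow_pos_of_pos (by norm_num) ρ
  rw [← hun] at hpos
  exact lt_irrefl _ hpos

lemma heavy_seq (s : ℝ → ℝ) (hs : ∀ t, 0 < s t) (l : ℝ) (hl : 0 < l) (hl2 : l < 2)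
    (hrv : Tendsto (fun t => s (t * 2) / s t) atTop (𝓝 l))
    (hΛ : Tendsto (fun t => -Real.log (s t)) atTop atTop) :
    ∃ u : ℕ → ℝ, Tendsto u atTop atTop ∧
      Tendsto (fun n => u n / (-Real.log (s (u n)))) atTop atTop := by
  set Λ : ℝ → ℝ := fun t => -Real.log (s t) with hΛdef
  set q : ℝ := l / 2 with hqdef
  have hq0 : 0 < q := by positivity
  have hq1 : q < 1 := by rw [hqdef]; linarith
  have hql : q < l := by rw [hqdef]; linarith
  obtain ⟨T₀, hT₀⟩ := eventually_atTop.mp (hrv.eventually_const_le hql)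
  set T : ℝ := max T₀ 1 with hTdef
  have hT1 : (1:ℝ) ≤ T := le_max_right _ _
  have hTpos : (0:ℝ) < T := lt_of_lt_of_le one_pos hT1
  have hun_ge : ∀ n : ℕ, T ≤ T * 2 ^ n := fun n =>
    le_mul_of_one_le_right hTpos.le (one_le_pow₀ (by norm_num))
  have hstep : ∀ n : ℕ, q * s (T * 2 ^ n) ≤ s (T * 2 ^ n * 2) := by
    intro n
    have h := hT₀ (T * 2 ^ n) (le_trans (le_max_left _ _) (hun_ge n))
    exact (le_div_iff₀ (hs _)).mp h
  have key : ∀ n : ℕ, q ^ n * s T ≤ s (T * 2 ^ n) := by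
    intro n
    induction n with
    | zero => simp
    | succ n ih =>
      have h1 : T * 2 ^ (n + 1) = T * 2 ^ n * 2 := by ring
      rw [h1]
      calc q ^ (n + 1) * s T = q * (q ^ n * s T) := by ring
        _ ≤ q * s (T * 2 ^ n) := mul_le_mul_of_nonneg_left ih hq0.le
        _ ≤ s (T * 2 ^ n * 2) := hstep n
  set B : ℝ := -Real.log q with hBdef
  have hB : 0 < B := by
    rw [hBdef]
    simpa using Real.log_neg hq0 hq1
  set A : ℝ := Λ T with hAdef
  have Λbound : ∀ n : ℕ, Λ (T * 2 ^ n) ≤ A + B * n := by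
    intro n
    have hlog : Real.log (q ^ n * s T) ≤ Real.log (s (T * 2 ^ n)) :=
      Real.log_le_log (mul_pos (pow_pos hq0 n) (hs T)) (key n)
    have heq : Real.log (q ^ n * s T) = n * Real.log q + Real.log (s T) := by
      rw [Real.log_mul (by positivity) (hs T).ne', Real.log_pow]
    simp only [hΛdef, hAdef, hBdef]
    have hneg : -Real.log (s (T * 2 ^ n)) ≤ -Real.log (q ^ n * s T) := by linarith
    rw [heq] at hneg
    calc -Real.log (s (T * 2 ^ n)) ≤ -(↑n * Real.log q + Real.log (s T)) := hneg
      _ = -Real.log (s T) + -Real.log q * n := by ring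
  have htop : Tendsto (fun n : ℕ => T * 2 ^ n) atTop atTop :=
    Tendsto.const_mul_atTop hTpos
      (tendsto_pow_atTop_atTop_of_one_lt (by norm_num : (1:ℝ) < 2))
  have hΛun : Tendsto (fun n : ℕ => Λ (T * 2 ^ n)) atTop atTop := hΛ.comp htop
  have hden : Tendsto (fun n : ℕ => A + B * n) atTop atTop :=
    tendsto_atTop_add_const_left _ A (Tendsto.const_mul_atTop hB tendsto_natCast_atTop_atTop)
  have hratio0 : Tendsto (fun n : ℕ => (A + B * n) / (T * 2 ^ n)) atTop (𝓝 0) := by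
    have h1 : Tendsto (fun n : ℕ => ((1:ℝ)/2) ^ n) atTop (𝓝 0) :=
      tendsto_pow_atTop_nhds_zero_of_lt_one (by norm_num) (by norm_num)
    have h2 : Tendsto (fun n : ℕ => (n:ℝ) * ((1:ℝ)/2) ^ n) atTop (𝓝 0) := by
      have := (summable_pow_mul_geometric_of_norm_lt_one 1
        (r := (1:ℝ)/2) (by norm_num)).tendsto_atTop_zero
      simpa using this
    have h3 : Tendsto (fun n : ℕ => (A * ((1:ℝ)/2) ^ n + B * ((n:ℝ) * ((1:ℝ)/2) ^ n)) / T)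
        atTop (𝓝 0) := by
      have := ((h1.const_mul A).add (h2.const_mul B)).div_const T
      simpa using this
    apply h3.congr
    intro n
    have h2n : (0:ℝ) < 2 ^ n := by positivity
    simp only [one_div, inv_pow]
    rw [div_eq_div_iff hTpos.ne' (by positivity : (0:ℝ) < T * 2 ^ n).ne']
    field_simp
  have hpos_ev : ∀ᶠ n : ℕ in atTop, (A + B * n) / (T * 2 ^ n) ∈ Ioi (0:ℝ) := by
    filter_upwards [hden.eventually_ge_atTop 1] with n hn
    have h2n : (0:ℝ) < 2 ^ n := by positivity
    have hAB : (0:ℝ) < A + B * n := lt_of_lt_of_le one_pos hn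
    exact div_pos hAB (by positivity)
  have hinv : Tendsto (fun n : ℕ => T * 2 ^ n / (A + B * n)) atTop atTop := by
    have h := tendsto_inv_nhdsGT_zero.comp
      (tendsto_nhdsWithin_of_tendsto_nhds_of_eventually_within _ hratio0 hpos_ev)
    apply h.congr
    intro n
    simp [Function.comp, inv_div]
  refine ⟨fun n => T * 2 ^ n, htop, tendsto_atTop_mono' atTop ?_ hinv⟩
  filter_upwards [hΛun.eventually_ge_atTop 1, hden.eventually_ge_atTop 1] with n h1 h2
  have h2n : (0:ℝ) ≤ T * 2 ^ n := by positivity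
  have hΛpos : (0:ℝ) < Λ (T * 2 ^ n) := lt_of_lt_of_le one_pos h1
  exact div_le_div_of_nonneg_left h2n hΛpos (Λbound n)

lemma weibull_seq (Λ : ℝ → ℝ) (l : ℝ) (hl : 0 < l) (hl2 : l < 2)
    (hrv : Tendsto (fun t => Λ (t * 2) / Λ t) atTop (𝓝 l))
    (hΛ : Tendsto Λ atTop atTop) :
    ∃ u : ℕ → ℝ, Tendsto u atTop atTop ∧
      Tendsto (fun n => u n / Λ (u n)) atTop atTop := by
  set r : ℝ := (l + 2) / 2 with hrdef
  have hr0 : 0 < r := by rw [hrdef]; linarith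
  have hlr : l < r := by rw [hrdef]; linarith
  have hr2 : r < 2 := by rw [hrdef]; linarith
  obtain ⟨T₀, hT₀⟩ := eventually_atTop.mp (hrv.eventually_le_const hlr)
  obtain ⟨T₁, hT₁⟩ := eventually_atTop.mp (hΛ.eventually_ge_atTop 1)
  set T : ℝ := max (max T₀ T₁) 1 with hTdef
  have hT1 : (1:ℝ) ≤ T := le_max_right _ _
  have hTpos : (0:ℝ) < T := lt_of_lt_of_le one_pos hT1
  have hun_ge : ∀ n : ℕ, T ≤ T * 2 ^ n := fun n =>
    le_mul_of_one_le_right hTpos.le (one_le_pow₀ (by norm_num))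
  have hΛ1 : ∀ n : ℕ, (1:ℝ) ≤ Λ (T * 2 ^ n) := fun n =>
    hT₁ _ (le_trans (le_trans (le_max_right _ _) (le_max_left _ _)) (hun_ge n))
  have hstep : ∀ n : ℕ, Λ (T * 2 ^ n * 2) ≤ r * Λ (T * 2 ^ n) := by
    intro n
    have h := hT₀ (T * 2 ^ n)
      (le_trans (le_trans (le_max_left _ _) (le_max_left _ _)) (hun_ge n))
    have hpos : (0:ℝ) < Λ (T * 2 ^ n) := lt_of_lt_of_le one_pos (hΛ1 n)
    calc Λ (T * 2 ^ n * 2) = Λ (T * 2 ^ n * 2) / Λ (T * 2 ^ n) * Λ (T * 2 ^ n) := by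
          field_simp
      _ ≤ r * Λ (T * 2 ^ n) := mul_le_mul_of_nonneg_right h hpos.le
  set C : ℝ := Λ T with hCdef
  have hC1 : (1:ℝ) ≤ C := by
    have := hΛ1 0
    simpa using this
  have key : ∀ n : ℕ, Λ (T * 2 ^ n) ≤ C * r ^ n := by
    intro n
    induction n with
    | zero => simp [hCdef]
    | succ n ih =>
      have h1 : T * 2 ^ (n + 1) = T * 2 ^ n * 2 := by ring
      rw [h1]
      calc Λ (T * 2 ^ n * 2) ≤ r * Λ (T * 2 ^ n) := hstep n
        _ ≤ r * (C * r ^ n) := mul_le_mul_of_nonneg_left ih hr0.le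
        _ = C * r ^ (n + 1) := by ring
  have htop : Tendsto (fun n : ℕ => T * 2 ^ n) atTop atTop :=
    Tendsto.const_mul_atTop hTpos
      (tendsto_pow_atTop_atTop_of_one_lt (by norm_num : (1:ℝ) < 2))
  have h2r : 1 < 2 / r := (one_lt_div hr0).mpr hr2
  have hquot : Tendsto (fun n : ℕ => T / C * (2 / r) ^ n) atTop atTop :=
    Tendsto.const_mul_atTop (by positivity)
      (tendsto_pow_atTop_atTop_of_one_lt h2r)
  refine ⟨fun n => T * 2 ^ n, htop, tendsto_atTop_mono' atTop ?_ hquot⟩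
  filter_upwards with n
  have hΛpos : (0:ℝ) < Λ (T * 2 ^ n) := lt_of_lt_of_le one_pos (hΛ1 n)
  have heq : T / C * (2 / r) ^ n = T * 2 ^ n / (C * r ^ n) := by
    rw [div_pow]
    field_simp
  rw [heq]
  exact div_le_div_of_nonneg_left (by positivity) hΛpos (key n)

lemma construction
    (φ : ℝ → ℝ) (δ : ℝ) (hδ : 0 < δ) (hφ : PhiSmooth φ)
    (P₀ : Measure ℝ) [IsProbabilityMeasure P₀]
    (hs_pos : ∀ x, 0 < survival P₀ x)
    (w : ℝ → ℝ) (β : ℝ) (hβ0 : 0 < β)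
    (c mm : ℝ) (hc : 0 < c) (hmm1 : mm ≤ 1)
    (hwc : ∀ t ∈ Ioo (0:ℝ) mm, c ≤ w t)
    (η : ℝ) (hη : 0 < η) (hηφ : ∀ x : ℝ, |x - 1| < η → φ x ≤ δ/2)
    (X : ℝ) (hX2 : 2 ≤ X) (hXφ : ∀ x : ℝ, X ≤ x → φ x ≤ 2 * (x * Real.log x))
    (u M : ℝ) (hu1 : 1 ≤ u)
    (hΛ1 : 1 ≤ hazard P₀ u)
    (hε1 : δ / (4 * hazard P₀ u) ≤ β * mm)
    (hε2 : δ / (4 * hazard P₀ u) ≤ 1/2)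
    (hε3 : δ / (4 * hazard P₀ u) ≤ η/4)
    (hεX : X * survival P₀ u ≤ δ / (4 * hazard P₀ u))
    (hM : M ≤ c * u * (δ / (4 * hazard P₀ u) / β)) :
    ∃ P ∈ phiBall φ δ P₀, ENNReal.ofReal M ≤ tailRisk w β P := by
  set s : ℝ := survival P₀ u with hsdef
  set Λu : ℝ := hazard P₀ u with hΛdef
  set ε : ℝ := δ / (4 * Λu) with hεdef
  have hΛpos : (0:ℝ) < Λu := lt_of_lt_of_le one_pos hΛ1
  have hε0 : 0 < ε := by rw [hεdef]; positivity
  have hs0 : 0 < s := hs_pos u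
  have hlogs : Real.log s = -Λu := by
    rw [hΛdef]; simp [hazard, hsdef, survival]
  have hsexp : s = Real.exp (-Λu) := by rw [← hlogs, Real.exp_log hs0]
  have hs12 : s ≤ 1/2 := by
    rw [hsexp]
    have h1 : Real.exp (-Λu) ≤ Real.exp (-1) := Real.exp_le_exp.mpr (by linarith)
    have h2 : (2:ℝ) < Real.exp 1 := lt_trans (by norm_num) Real.exp_one_gt_d9
    have h3 : Real.exp (-1) * Real.exp 1 = 1 := by
      rw [← Real.exp_add]; norm_num
    nlinarith [Real.exp_pos (-1)]
  have hsε : s ≤ ε := le_trans (le_mul_of_one_le_left hs0.le (by linarith)) hεX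
  set a : ℝ := (1 - ε)/(1 - s) with hadef
  set b : ℝ := ε / s with hbdef
  have h1s : (1:ℝ)/2 ≤ 1 - s := by linarith
  have h1s0 : (0:ℝ) < 1 - s := by linarith
  have ha0 : 0 ≤ a := div_nonneg (by linarith) h1s0.le
  have hb0 : 0 < b := div_pos hε0 hs0
  have hbX : X ≤ b := (le_div_iff₀ hs0).mpr hεX
  have hb1 : 1 < b := by linarith
  have ha_near : |a - 1| < η := by
    have heq : a - 1 = (s - ε)/(1 - s) := by
      rw [hadef]; field_simp; ring
    have habs : |a - 1| ≤ 2 * ε := by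
      rw [heq, abs_div, abs_of_pos h1s0, abs_of_nonpos (by linarith : s - ε ≤ 0)]
      rw [div_le_iff₀ h1s0]
      nlinarith
    linarith
  have hφa : φ a ≤ δ/2 := hηφ a ha_near
  have hφa0 : 0 ≤ φ a := hφ.nonneg a ha0
  have hφb0 : 0 ≤ φ b := hφ.nonneg b (by linarith)
  have hbs : b * s = ε := div_mul_cancel₀ _ hs0.ne'
  have ha1s : a * (1 - s) = 1 - ε := div_mul_cancel₀ _ h1s0.ne'
  have hφbs : φ b * s ≤ δ/2 := by
    have hφb : φ b ≤ 2 * (b * Real.log b) := hXφ b hbX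
    have hlogb : Real.log b = Real.log ε - Real.log s := Real.log_div hε0.ne' hs0.ne'
    have hlogε : Real.log ε ≤ 0 := Real.log_nonpos hε0.le (by linarith)
    have hlogb_le : Real.log b ≤ Λu := by rw [hlogb, hlogs]; linarith
    calc φ b * s ≤ 2 * (b * Real.log b) * s := mul_le_mul_of_nonneg_right hφb hs0.le
      _ = 2 * ε * Real.log b := by rw [← hbs]; ring
      _ ≤ 2 * ε * Λu := mul_le_mul_of_nonneg_left hlogb_le (by positivity)
      _ = δ/2 := by rw [hεdef]; field_simp; ring
  -- the measure
  set hfun : ℝ → ℝ≥0∞ := fun x => if x ≤ u then ENNReal.ofReal a else ENNReal.ofReal b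
    with hfdef
  have hmeas : Measurable hfun :=
    Measurable.ite measurableSet_Iic measurable_const measurable_const
  set P : Measure ℝ := P₀.withDensity hfun with hPdef
  have hIoiInt : ∀ va vb : ℝ≥0∞,
      ∫⁻ x in Ioi u, (if x ≤ u then va else vb) ∂P₀ = vb * P₀ (Ioi u) := by
    intro va vb
    rw [setLIntegral_congr_fun (f := fun x => if x ≤ u then va else vb) (g := fun _ => vb)
      measurableSet_Ioi (fun x (hx : x ∈ Ioi u) => if_neg (not_le.mpr hx)),
      setLIntegral_const]
  have hIicInt : ∀ va vb : ℝ≥0∞,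
      ∫⁻ x in Iic u, (if x ≤ u then va else vb) ∂P₀ = va * P₀ (Iic u) := by
    intro va vb
    rw [setLIntegral_congr_fun (f := fun x => if x ≤ u then va else vb) (g := fun _ => va)
      measurableSet_Iic (fun x (hx : x ∈ Iic u) => if_pos hx),
      setLIntegral_const]
  have hsplit : ∀ va vb : ℝ≥0∞,
      ∫⁻ x, (if x ≤ u then va else vb) ∂P₀ = va * P₀ (Iic u) + vb * P₀ (Ioi u) := by
    intro va vb
    rw [← lintegral_add_compl (fun x => if x ≤ u then va else vb) measurableSet_Iic (μ := P₀),
      hIicInt, compl_Iic, hIoiInt]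
  have hPIoi : P (Ioi u) = ENNReal.ofReal ε := by
    rw [hPdef, withDensity_apply _ measurableSet_Ioi]
    show ∫⁻ x in Ioi u, (if x ≤ u then ENNReal.ofReal a else ENNReal.ofReal b) ∂P₀ = _
    rw [hIoiInt, measure_Ioi_eq P₀ u, ← hsdef, ← ENNReal.ofReal_mul hb0.le, hbs]
  have hIic : P₀ (Iic u) = ENNReal.ofReal (1 - s) := by
    have h := prob_compl_eq_one_sub (μ := P₀) (measurableSet_Ioi (a := u))
    rw [compl_Ioi] at h
    rw [h, measure_Ioi_eq P₀ u, ← hsdef, ← ENNReal.ofReal_one,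
      ← ENNReal.ofReal_sub _ hs0.le]
  have huniv : P univ = 1 := by
    rw [hPdef, withDensity_apply _ MeasurableSet.univ, Measure.restrict_univ]
    show ∫⁻ x, (if x ≤ u then ENNReal.ofReal a else ENNReal.ofReal b) ∂P₀ = 1
    rw [hsplit, hIic, measure_Ioi_eq P₀ u, ← hsdef,
      ← ENNReal.ofReal_mul ha0, ← ENNReal.ofReal_mul hb0.le, ha1s, hbs,
      ← ENNReal.ofReal_add (by linarith) hε0.le]
    norm_num
  have hProb : IsProbabilityMeasure P := ⟨huniv⟩
  have hac : P ≪ P₀ := withDensity_absolutelyContinuous _ _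
  have hdiv : phiDiv φ P P₀ ≤ ENNReal.ofReal δ := by
    rw [phiDiv, if_pos hac]
    have hrd := Measure.rnDeriv_withDensity P₀ hmeas
    calc ∫⁻ x, ENNReal.ofReal (φ (P.rnDeriv P₀ x).toReal) ∂P₀
        = ∫⁻ x, (if x ≤ u then ENNReal.ofReal (φ a) else ENNReal.ofReal (φ b)) ∂P₀ := by
          apply lintegral_congr_ae
          filter_upwards [hrd] with x hx
          rw [hx]
          by_cases hxu : x ≤ u
          · simp [hfdef, hxu, ENNReal.toReal_ofReal ha0]
          · simp [hfdef, hxu, ENNReal.toReal_ofReal hb0.le]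
      _ = ENNReal.ofReal (φ a) * P₀ (Iic u) + ENNReal.ofReal (φ b) * P₀ (Ioi u) :=
          hsplit _ _
      _ ≤ ENNReal.ofReal (φ a) * 1 + ENNReal.ofReal (φ b) * ENNReal.ofReal s := by
          gcongr
          · exact prob_le_one
          · exact le_of_eq (measure_Ioi_eq P₀ u)
      _ = ENNReal.ofReal (φ a) + ENNReal.ofReal (φ b * s) := by
          rw [mul_one, ENNReal.ofReal_mul hφb0]
      _ ≤ ENNReal.ofReal (δ/2) + ENNReal.ofReal (δ/2) := by
          gcongr
      _ = ENNReal.ofReal δ := by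
          rw [← ENNReal.ofReal_add (by linarith) (by linarith)]
          norm_num
  -- VaR lower bound
  have hVaR : ∀ s', 0 < s' → s' < ε → u ≤ VaR P s' := by
    intro s' hs'0 hs'ε
    apply le_csInf
    · have h0 : (0:ℝ≥0∞) < ENNReal.ofReal s' := by
        simpa using ENNReal.ofReal_pos.mpr hs'0
      obtain ⟨x, hx⟩ := ((tendsto_measure_Ioi_zero P).eventually_lt_const h0).exists
      exact ⟨x, hx.le⟩
    · intro v hv
      by_contra hlt
      push_neg at hlt
      have hle : ENNReal.ofReal ε ≤ ENNReal.ofReal s' := by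
        calc ENNReal.ofReal ε = P (Ioi u) := hPIoi.symm
          _ ≤ P (Ioi v) := measure_mono (Ioi_subset_Ioi hlt.le)
          _ ≤ ENNReal.ofReal s' := hv
      have := (ENNReal.ofReal_le_ofReal_iff hs'0.le).mp hle
      linarith
  -- tail risk lower bound
  refine ⟨P, ⟨hProb, hdiv⟩, ?_⟩
  have ht0pos : 0 < ε / β := by positivity
  have ht0m : ε / β ≤ mm := (div_le_iff₀ hβ0).mpr (by linarith [hε1])
  have ht01 : ε / β ≤ 1 := le_trans ht0m hmm1
  calc ENNReal.ofReal M ≤ ENNReal.ofReal (c * u * (ε/β)) := ENNReal.ofReal_le_ofReal hM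
    _ = ENNReal.ofReal (c*u) * ENNReal.ofReal (ε/β) := ENNReal.ofReal_mul (by positivity)
    _ = ENNReal.ofReal (c*u) * volume (Ioo 0 (ε/β)) := by rw [Real.volume_Ioo]; norm_num
    _ = ∫⁻ _ in Ioo (0:ℝ) (ε/β), ENNReal.ofReal (c*u) := (setLIntegral_const _ _).symm
    _ ≤ ∫⁻ t in Ioo (0:ℝ) (ε/β), ENNReal.ofReal (w t * VaR P (β*t)) := by
        apply setLIntegral_mono' measurableSet_Ioo
        intro t ht
        apply ENNReal.ofReal_le_ofReal
        have hwt : c ≤ w t := hwc t ⟨ht.1, lt_of_lt_of_le ht.2 ht0m⟩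
        have hβt : β * t < ε := by
          have := (lt_div_iff₀ hβ0).mp ht.2
          linarith
        have hVt : u ≤ VaR P (β*t) := hVaR (β*t) (mul_pos hβ0 ht.1) hβt
        exact mul_le_mul hwt hVt (by linarith) (le_trans hc.le hwt)
    _ ≤ tailRisk w β P :=
        lintegral_mono_set (fun t ht => ⟨ht.1, le_trans ht.2.le ht01⟩)


/-- for `φ(x) ~ x log x` and `P₀` heavy-tailed with `γ > 1` or Weibull-type
with `γ < 1`, and a weight function bounded below near `0`, the worst-case risk over the
φ-divergence ball is infinite. -/
theorem worstRisk_phiBall_eq_top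
    (φ : ℝ → ℝ) (δ : ℝ) (hδ : 0 < δ) (hφ : PhiSmooth φ)
    (hφlog : Tendsto (fun x : ℝ => φ x / (x * Real.log x)) atTop (𝓝 1))
    (P₀ : Measure ℝ) [IsProbabilityMeasure P₀]
    (γ : ℝ)
    (hP : (1 < γ ∧ HeavyTailed P₀ γ) ∨ (0 < γ ∧ γ < 1 ∧ WeibullTailed P₀ γ))
    (w : ℝ → ℝ) (κ : ℝ) (ℓ : ℝ → ℝ) (hw : IsWeight w κ ℓ)
    (m : ℝ) (hm : 0 < m) (hwpos : ∃ c : ℝ, 0 < c ∧ ∀ t ∈ Ioo (0:ℝ) m, c ≤ w t)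
    (β : ℝ) (hβ : β ∈ Ioo (0:ℝ) 1) :
    worstRisk w β (phiBall φ δ P₀) = ⊤ := by
  obtain ⟨hβ0, hβ1⟩ := hβ
  have hs_pos : ∀ x, 0 < survival P₀ x := by
    by_contra hcon
    push_neg at hcon
    obtain ⟨x₀, hx₀⟩ := hcon
    have hx0 : survival P₀ x₀ = 0 := le_antisymm hx₀ (survival_nonneg P₀ x₀)
    have hzero : ∀ t, x₀ ≤ t → survival P₀ t = 0 := fun t ht =>
      le_antisymm (hx0 ▸ survival_antitone P₀ ht) (survival_nonneg P₀ t)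
    rcases hP with ⟨_, hHT⟩ | ⟨_, _, hWT⟩
    · exact regvary_pos _ _ hHT x₀ hzero
    · exact regvary_pos _ _ hWT x₀ (fun t ht => by simp [hazard, hzero t ht])
  have hΛtop : Tendsto (hazard P₀) atTop atTop := by
    have h1 : Tendsto (survival P₀) atTop (𝓝[>] 0) :=
      tendsto_nhdsWithin_of_tendsto_nhds_of_eventually_within _
        (survival_tendsto_zero P₀) (Eventually.of_forall fun x => hs_pos x)
    have h2 := Real.tendsto_log_nhdsGT_zero.comp h1
    exact tendsto_neg_atBot_atTop.comp h2
  obtain ⟨u, hu_top, hu_rat⟩ :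
      ∃ u : ℕ → ℝ, Tendsto u atTop atTop ∧
        Tendsto (fun n => u n / hazard P₀ (u n)) atTop atTop := by
    rcases hP with ⟨hγ, hHT⟩ | ⟨hγ0, hγ1, hWT⟩
    · have hrv2 := hHT 2 (by norm_num)
      have hl0 : (0:ℝ) < 2 ^ (-γ) := Real.rpow_pos_of_pos (by norm_num) _
      have hl2 : (2:ℝ) ^ (-γ) < 2 :=
        lt_trans (Real.rpow_lt_one_of_one_lt_of_neg (by norm_num) (by linarith)) (by norm_num)
      obtain ⟨u, h1, h2⟩ := heavy_seq (survival P₀) hs_pos _ hl0 hl2 hrv2 hΛtop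
      exact ⟨u, h1, h2⟩
    · have hrv2 := hWT 2 (by norm_num)
      have hl0 : (0:ℝ) < 2 ^ γ := Real.rpow_pos_of_pos (by norm_num) _
      have hl2 : (2:ℝ) ^ γ < 2 := by
        have h := Real.rpow_lt_rpow_of_exponent_lt (x := 2) (by norm_num) hγ1
        simpa using h
      exact weibull_seq (hazard P₀) _ hl0 hl2 hrv2 hΛtop
  have hΛu : Tendsto (fun n => hazard P₀ (u n)) atTop atTop := hΛtop.comp hu_top
  obtain ⟨c, hc, hwc⟩ := hwpos
  set mm : ℝ := min m 1 with hmmdef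
  have hmm0 : 0 < mm := lt_min hm one_pos
  have hmm1 : mm ≤ 1 := min_le_right _ _
  have hwc' : ∀ t ∈ Ioo (0:ℝ) mm, c ≤ w t := fun t ht =>
    hwc t ⟨ht.1, lt_of_lt_of_le ht.2 (min_le_left _ _)⟩
  have hcont : Tendsto φ (𝓝 1) (𝓝 0) := by
    have h := hφ.diff1.continuous.tendsto 1
    rwa [hφ.at_one] at h
  obtain ⟨η, hη, hηφ⟩ : ∃ η > 0, ∀ x : ℝ, |x - 1| < η → φ x ≤ δ/2 := by
    have hev : ∀ᶠ x in 𝓝 1, φ x ≤ δ/2 :=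
      hcont.eventually_le_const (by linarith)
    rw [Metric.eventually_nhds_iff] at hev
    obtain ⟨η, hη, h⟩ := hev
    exact ⟨η, hη, fun x hx => h (by simpa [Real.dist_eq] using hx)⟩
  obtain ⟨X, hX2, hXφ⟩ : ∃ X : ℝ, 2 ≤ X ∧ ∀ x : ℝ, X ≤ x → φ x ≤ 2 * (x * Real.log x) := by
    have hev : ∀ᶠ x : ℝ in atTop, φ x / (x * Real.log x) ≤ 2 :=
      hφlog.eventually_le_const (by norm_num)
    obtain ⟨X₀, hX₀⟩ := eventually_atTop.mp hev
    refine ⟨max X₀ 2, le_max_right _ _, fun x hx => ?_⟩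
    have hx2 : (2:ℝ) ≤ x := le_trans (le_max_right _ _) hx
    have hlogpos : 0 < Real.log x := Real.log_pos (by linarith)
    have hpos : 0 < x * Real.log x := mul_pos (by linarith) hlogpos
    have hr := hX₀ x (le_trans (le_max_left _ _) hx)
    calc φ x = φ x / (x * Real.log x) * (x * Real.log x) := by field_simp
      _ ≤ 2 * (x * Real.log x) := mul_le_mul_of_nonneg_right hr hpos.le
  have hXpos : (0:ℝ) < X := by linarith
  obtain ⟨L₂, hL₂⟩ : ∃ L₂ : ℝ, ∀ y, L₂ ≤ y → y * Real.exp (-y) ≤ δ/(4*X) := by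
    have h := Real.tendsto_pow_mul_exp_neg_atTop_nhds_zero 1
    have hev : ∀ᶠ y : ℝ in atTop, y ^ 1 * Real.exp (-y) ≤ δ/(4*X) :=
      h.eventually_le_const (by positivity)
    obtain ⟨L₂, hL⟩ := eventually_atTop.mp hev
    exact ⟨L₂, fun y hy => by simpa using hL y hy⟩
  set K : ℝ := min (β * mm) (min (1/2) (η/4)) with hKdef
  have hK : 0 < K := lt_min (by positivity) (lt_min (by norm_num) (by positivity))
  have main : ∀ M : ℝ, ENNReal.ofReal M ≤ worstRisk w β (phiBall φ δ P₀) := by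
    intro M
    have ev1 := hu_top.eventually_ge_atTop 1
    have ev2 := hΛu.eventually_ge_atTop (max 1 (max (δ/(4*K)) L₂))
    have ev3 := hu_rat.eventually_ge_atTop (4*β*M/(c*δ))
    obtain ⟨n, hn1, hn2, hn3⟩ := (ev1.and (ev2.and ev3)).exists
    set Λn := hazard P₀ (u n) with hΛndef
    have hΛ1 : 1 ≤ Λn := le_trans (le_max_left _ _) hn2
    have hΛK : δ/(4*K) ≤ Λn := le_trans (le_trans (le_max_left _ _) (le_max_right _ _)) hn2
    have hΛL₂ : L₂ ≤ Λn := le_trans (le_trans (le_max_right _ _) (le_max_right _ _)) hn2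
    have hΛpos : (0:ℝ) < Λn := by linarith
    have hεK : δ/(4*Λn) ≤ K := by
      rw [div_le_iff₀ (by positivity)]
      have h := (div_le_iff₀ (by positivity : (0:ℝ) < 4*K)).mp hΛK
      nlinarith
    have hε1 : δ/(4*Λn) ≤ β * mm := le_trans hεK (min_le_left _ _)
    have hε2 : δ/(4*Λn) ≤ 1/2 := le_trans hεK (le_trans (min_le_right _ _) (min_le_left _ _))
    have hε3 : δ/(4*Λn) ≤ η/4 := le_trans hεK (le_trans (min_le_right _ _) (min_le_right _ _))
    have hεX : X * survival P₀ (u n) ≤ δ/(4*Λn) := by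
      have hs0 : 0 < survival P₀ (u n) := hs_pos (u n)
      have hlogs : Real.log (survival P₀ (u n)) = -Λn := by
        simp [hΛndef, hazard]
      have hsexp : survival P₀ (u n) = Real.exp (-Λn) := by
        rw [← hlogs, Real.exp_log hs0]
      have h := hL₂ Λn hΛL₂
      rw [le_div_iff₀ (by positivity : (0:ℝ) < 4*X)] at h
      rw [le_div_iff₀ (by positivity : (0:ℝ) < 4*Λn), hsexp]
      nlinarith [Real.exp_pos (-Λn)]
    have hM : M ≤ c * u n * (δ/(4*Λn)/β) := by
      have heq : c * u n * (δ/(4*Λn)/β) = c*δ/(4*β) * (u n / Λn) := by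
        field_simp
      have hposc : (0:ℝ) ≤ c*δ/(4*β) := by positivity
      have hmul := mul_le_mul_of_nonneg_left hn3 hposc
      have heq2 : c*δ/(4*β) * (4*β*M/(c*δ)) = M := by
        field_simp
      rw [heq]
      calc M = c*δ/(4*β) * (4*β*M/(c*δ)) := heq2.symm
        _ ≤ c*δ/(4*β) * (u n / Λn) := hmul
    obtain ⟨P, hPmem, hPle⟩ := construction φ δ hδ hφ P₀ hs_pos w β hβ0 c mm hc hmm1
      hwc' η hη hηφ X hX2 hXφ (u n) M hn1 hΛ1 hε1 hε2 hε3 hεX hM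
    exact le_trans hPle (le_biSup _ hPmem)
  by_contra hne
  have h1 := main ((worstRisk w β (phiBall φ δ P₀)).toReal + 1)
  have h2 : worstRisk w β (phiBall φ δ P₀) <
      ENNReal.ofReal ((worstRisk w β (phiBall φ δ P₀)).toReal + 1) := by
    rw [ENNReal.lt_ofReal_iff_toReal_lt hne]
    linarith
  exact absurd h1 (not_le.mpr h2)

end
end

section
/- Let (U_i)_{i≥1} be i.i.d. random variables uniformly distributed on [0,1], and for each n let U_{k:n} denote the k-th smallest value among U_1,…,U_n. Fix 0 < ε < 1/2 and for θ ∈ [ε, 1−ε] set k_{n,θ} = ⌊n^{1−θ}⌋. Then sup_{θ ∈ [ε,1−ε]} | (n / k_{n,θ}) · U_{k_{n,θ}:n} − 1 | → 0 almost surely as n → ∞. -/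
open MeasureTheory Filter Set
open scoped ENNReal NNReal Topology Classical

noncomputable section

/-- The `k`-th smallest value among `U 0 ω, …, U (n-1) ω`. -/
def orderStat {Ω : Type*} (U : ℕ → Ω → ℝ) (n k : ℕ) (ω : Ω) : ℝ :=
  sInf {x : ℝ | k ≤ ((Finset.range n).filter (fun i => U i ω ≤ x)).card}


section OSauxSec
open Real ProbabilityTheory

namespace OSaux

variable {Ω : Type*} [MeasurableSpace Ω] {PP : Measure Ω} [IsProbabilityMeasure PP]
  {U : ℕ → Ω → ℝ}

set_option linter.unusedSectionVars false
set_option linter.unusedVariables false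

def ind (x : ℝ) (u : ℝ) : ℝ := if u ≤ x then 1 else 0

lemma meas_ind (x : ℝ) : Measurable (ind x) := by
  unfold ind
  exact Measurable.ite measurableSet_Iic measurable_const measurable_const

lemma ind_nonneg (x u : ℝ) : 0 ≤ ind x u := by unfold ind; split <;> norm_num

lemma ind_le_one (x u : ℝ) : ind x u ≤ 1 := by unfold ind; split <;> norm_num

def S (U : ℕ → Ω → ℝ) (n : ℕ) (x : ℝ) (ω : Ω) : ℝ := ∑ i ∈ Finset.range n, ind x (U i ω)

lemma card_eq (n : ℕ) (x : ℝ) (ω : Ω) :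
    (((Finset.range n).filter (fun i => U i ω ≤ x)).card : ℝ) = S U n x ω := by
  rw [Finset.card_filter]
  push_cast
  unfold S ind
  simp

lemma S_nonneg (n : ℕ) (x : ℝ) (ω : Ω) : 0 ≤ S U n x ω :=
  Finset.sum_nonneg fun i _ => ind_nonneg _ _

lemma S_le (n : ℕ) (x : ℝ) (ω : Ω) : S U n x ω ≤ n := by
  calc S U n x ω ≤ ∑ i ∈ Finset.range n, (1:ℝ) :=
        Finset.sum_le_sum fun i _ => ind_le_one _ _
    _ = n := by simp

lemma mgf_ind (hmeas : ∀ i, Measurable (U i))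
    (hunif : ∀ i, PP.map (U i) = volume.restrict (Icc (0:ℝ) 1)) (i : ℕ)
    {x : ℝ} (hx : x ∈ Icc (0:ℝ) 1) (t : ℝ) :
    mgf (fun ω => ind x (U i ω)) PP t = 1 + x * (exp t - 1) := by
  have hfun : ∀ u : ℝ, exp (t * ind x u) = 1 + (exp t - 1) * ind x u := by
    intro u
    unfold ind
    split <;> simp
  unfold mgf
  simp_rw [hfun]
  have hmap := integral_map (μ := PP) (φ := U i) (hmeas i).aemeasurable
    (f := fun u => 1 + (exp t - 1) * ind x u)
    (Measurable.aestronglyMeasurable (measurable_const.add ((meas_ind x).const_mul _)))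
  rw [show (fun ω => 1 + (exp t - 1) * ind x (U i ω))
      = fun ω => (fun u => 1 + (exp t - 1) * ind x u) (U i ω) from rfl, ← hmap, hunif i]
  have hind_eq : ind x = (Iic x).indicator (fun _ => (1:ℝ)) := by
    funext u; unfold ind; simp [Set.indicator, Set.mem_Iic]
  have hint1 : Integrable (fun u : ℝ => (exp t - 1) * ind x u)
      (volume.restrict (Icc (0:ℝ) 1)) := by
    rw [hind_eq]
    exact (IntegrableOn.indicator (integrableOn_const (C := (1:ℝ)) (s := Icc (0:ℝ) 1) (μ := volume) (by simp))
      measurableSet_Iic).const_mul _ |>.congr (by rfl)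
  rw [integral_add (integrable_const 1) hint1, integral_const]
  have hvol : (volume.restrict (Icc (0:ℝ) 1)) Set.univ = 1 := by
    simp [Real.volume_Icc]
  rw [integral_const_mul, hind_eq, integral_indicator_const _ measurableSet_Iic,
    measureReal_def, measureReal_def]
  rw [Measure.restrict_apply measurableSet_Iic]
  have : Iic x ∩ Icc 0 1 = Icc 0 x := by
    ext u
    simp only [mem_inter_iff, mem_Iic, mem_Icc]
    constructor
    · rintro ⟨h1, h2, _⟩; exact ⟨h2, h1⟩
    · rintro ⟨h1, h2⟩; exact ⟨h2, h1, h2.trans hx.2⟩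
  rw [this, hvol, Real.volume_Icc]
  simp [ENNReal.toReal_ofReal hx.1]
  ring

lemma meas_S (hmeas : ∀ i, Measurable (U i)) (n : ℕ) (x : ℝ) : Measurable (S U n x) :=
  Finset.measurable_sum _ (fun i _ => (meas_ind x).comp (hmeas i))

lemma mgf_S (hindep : ProbabilityTheory.iIndepFun U PP)
    (hmeas : ∀ i, Measurable (U i))
    (hunif : ∀ i, PP.map (U i) = volume.restrict (Icc (0:ℝ) 1))
    (n : ℕ) {x : ℝ} (hx : x ∈ Icc (0:ℝ) 1) (t : ℝ) :
    mgf (S U n x) PP t = (1 + x * (exp t - 1)) ^ n := by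
  have hX : iIndepFun (fun i => ind x ∘ U i) PP :=
    hindep.comp (fun _ => ind x) (fun _ => meas_ind x)
  have hSeq : S U n x = ∑ i ∈ Finset.range n, (ind x ∘ U i) := by
    funext ω; simp [S, Finset.sum_apply]
  rw [hSeq, hX.mgf_sum (fun i => (meas_ind x).comp (hmeas i)) (Finset.range n)]
  have : ∀ i ∈ Finset.range n, mgf (ind x ∘ U i) PP t = 1 + x * (exp t - 1) := fun i _ =>
    mgf_ind hmeas hunif i hx t
  rw [Finset.prod_congr rfl this, Finset.prod_const, Finset.card_range]

lemma int_exp (hmeas : ∀ i, Measurable (U i)) (n : ℕ) (x t : ℝ) :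
    Integrable (fun ω => exp (t * S U n x ω)) PP := by
  refine (integrable_const (exp (|t| * n))).mono'
    (((meas_S hmeas n x).const_mul t).exp.aestronglyMeasurable) (ae_of_all _ fun ω => ?_)
  rw [norm_eq_abs, abs_of_pos (exp_pos _)]
  refine exp_le_exp.2 ?_
  calc t * S U n x ω ≤ |t * S U n x ω| := le_abs_self _
    _ = |t| * S U n x ω := by rw [abs_mul, abs_of_nonneg (S_nonneg n x ω)]
    _ ≤ |t| * n := mul_le_mul_of_nonneg_left (S_le n x ω) (abs_nonneg t)

lemma pow_le_exp {x : ℝ} (hx : x ∈ Icc (0:ℝ) 1) (t : ℝ) (n : ℕ) :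
    (1 + x * (exp t - 1)) ^ n ≤ exp ((n:ℝ) * (x * (exp t - 1))) := by
  have h0 : 0 ≤ 1 + x * (exp t - 1) := by nlinarith [exp_pos t, hx.1, hx.2]
  calc (1 + x * (exp t - 1)) ^ n ≤ exp (x * (exp t - 1)) ^ n :=
        pow_le_pow_left₀ h0 (by linarith [add_one_le_exp (x * (exp t - 1))]) n
    _ = exp ((n:ℝ) * (x * (exp t - 1))) := (exp_nat_mul _ n).symm

lemma chernoff_ge (hindep : ProbabilityTheory.iIndepFun U PP)
    (hmeas : ∀ i, Measurable (U i))
    (hunif : ∀ i, PP.map (U i) = volume.restrict (Icc (0:ℝ) 1))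
    (n : ℕ) {x : ℝ} (hx : x ∈ Icc (0:ℝ) 1) (k : ℝ) {t : ℝ} (ht : 0 ≤ t) :
    PP {ω | k ≤ S U n x ω} ≤ ENNReal.ofReal (exp (-t * k + n * (x * (exp t - 1)))) := by
  rw [ENNReal.le_ofReal_iff_toReal_le (measure_ne_top _ _) (exp_pos _).le]
  calc (PP {ω | k ≤ S U n x ω}).toReal ≤ exp (-t * k) * mgf (S U n x) PP t :=
        measure_ge_le_exp_mul_mgf k ht (int_exp hmeas n x t)
    _ ≤ exp (-t * k) * exp ((n:ℝ) * (x * (exp t - 1))) := by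
        rw [mgf_S hindep hmeas hunif n hx t]
        exact mul_le_mul_of_nonneg_left (pow_le_exp hx t n) (exp_pos _).le
    _ = exp (-t * k + n * (x * (exp t - 1))) := (exp_add _ _).symm

lemma chernoff_le (hindep : ProbabilityTheory.iIndepFun U PP)
    (hmeas : ∀ i, Measurable (U i))
    (hunif : ∀ i, PP.map (U i) = volume.restrict (Icc (0:ℝ) 1))
    (n : ℕ) {x : ℝ} (hx : x ∈ Icc (0:ℝ) 1) (k : ℝ) {t : ℝ} (ht : t ≤ 0) :
    PP {ω | S U n x ω ≤ k} ≤ ENNReal.ofReal (exp (-t * k + n * (x * (exp t - 1)))) := by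
  rw [ENNReal.le_ofReal_iff_toReal_le (measure_ne_top _ _) (exp_pos _).le]
  calc (PP {ω | S U n x ω ≤ k}).toReal ≤ exp (-t * k) * mgf (S U n x) PP t :=
        measure_le_le_exp_mul_mgf k ht (int_exp hmeas n x t)
    _ ≤ exp (-t * k) * exp ((n:ℝ) * (x * (exp t - 1))) := by
        rw [mgf_S hindep hmeas hunif n hx t]
        exact mul_le_mul_of_nonneg_left (pow_le_exp hx t n) (exp_pos _).le
    _ = exp (-t * k + n * (x * (exp t - 1))) := (exp_add _ _).symm

lemma exp_quad {y : ℝ} (hy : |y| ≤ 1) : exp y ≤ 1 + y + (3/4) * y ^ 2 := by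
  have h := Real.exp_bound hy (by norm_num : (0:ℕ) < 2)
  have hsum : ∑ m ∈ Finset.range 2, y ^ m / m.factorial = 1 + y := by
    simp [Finset.sum_range_succ]
  rw [hsum] at h
  have h2 := (abs_sub_le_iff.1 h).1
  have h3 : |y| ^ 2 = y ^ 2 := sq_abs y
  rw [h3] at h2
  norm_num at h2 ⊢
  linarith

def thA (η : ℝ) (n k : ℕ) : ℝ := min ((k:ℝ)/((1-η)*n)) 1
def thB (η : ℝ) (n k : ℕ) : ℝ := (k:ℝ)/((1+η)*n)
def badA (U : ℕ → Ω → ℝ) (η : ℝ) (n k : ℕ) : Set Ω := {ω | S U n (thA η n k) ω ≤ (k:ℝ) - 1}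
def badB (U : ℕ → Ω → ℝ) (η : ℝ) (n k : ℕ) : Set Ω := {ω | (k:ℝ) ≤ S U n (thB η n k) ω}

lemma badB_bound (hindep : ProbabilityTheory.iIndepFun U PP)
    (hmeas : ∀ i, Measurable (U i))
    (hunif : ∀ i, PP.map (U i) = volume.restrict (Icc (0:ℝ) 1))
    {η : ℝ} (hη : 0 < η) (hη2 : η ≤ 1/2) {n k : ℕ} (hn : 1 ≤ n) (hk1 : 1 ≤ k) (hkn : k ≤ n) :
    PP (badB U η n k) ≤ ENNReal.ofReal (exp (-(η^2 * k) / 12)) := by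
  have hn0 : (0:ℝ) < n := by exact_mod_cast hn
  have hk0 : (0:ℝ) < k := by exact_mod_cast hk1
  have hkn' : (k:ℝ) ≤ n := by exact_mod_cast hkn
  have hq : thB η n k ∈ Icc (0:ℝ) 1 := by
    unfold thB
    constructor
    · exact div_nonneg hk0.le (by positivity)
    · rw [div_le_one (by positivity)]
      nlinarith
  have ht : (0:ℝ) ≤ η/3 := by linarith
  refine (chernoff_ge hindep hmeas hunif n hq (k:ℝ) ht).trans (ENNReal.ofReal_le_ofReal
    (exp_le_exp.2 ?_))
  have hnq : (n:ℝ) * thB η n k * (1+η) = k := by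
    unfold thB; field_simp
  set Q : ℝ := (n:ℝ) * thB η n k with hQ
  have hQ0 : 0 ≤ Q := by
    refine mul_nonneg (by positivity) hq.1
  have hE : exp (η/3) - 1 ≤ η/3 + η^2/12 := by
    have := exp_quad (y := η/3) (by rw [abs_of_nonneg ht]; linarith)
    nlinarith
  have hE0 : 0 ≤ exp (η/3) - 1 := by nlinarith [add_one_le_exp (η/3)]
  have h1 : Q * (exp (η/3) - 1) ≤ Q * (η/3 + η^2/12) := by
    exact mul_le_mul_of_nonneg_left hE hQ0
  -- goal: -(η/3) * k + n * (thB * (exp (η/3) - 1)) ≤ -(η^2*k)/12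
  have hgoal : -(η/3) * k + Q * (exp (η/3) - 1) ≤ -(η^2 * k) / 12 := by
    nlinarith [hnq, hQ0, h1, sq_nonneg η, mul_nonneg hQ0 (sq_nonneg η)]
  calc -(η/3) * k + (n:ℝ) * (thB η n k * (exp (η/3) - 1))
      = -(η/3) * k + Q * (exp (η/3) - 1) := by ring
    _ ≤ -(η^2 * k) / 12 := hgoal

lemma badA_bound (hindep : ProbabilityTheory.iIndepFun U PP)
    (hmeas : ∀ i, Measurable (U i))
    (hunif : ∀ i, PP.map (U i) = volume.restrict (Icc (0:ℝ) 1))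
    {η : ℝ} (hη : 0 < η) (hη2 : η ≤ 1/2) {n k : ℕ} (hn : 1 ≤ n) (hk1 : 1 ≤ k) (hkn : k ≤ n) :
    PP (badA U η n k) ≤ ENNReal.ofReal (exp (-(η^2 * k) / 12)) := by
  have hn0 : (0:ℝ) < n := by exact_mod_cast hn
  have hk0 : (0:ℝ) < k := by exact_mod_cast hk1
  have hkn' : (k:ℝ) ≤ n := by exact_mod_cast hkn
  have h1η : (0:ℝ) < 1 - η := by linarith
  by_cases hp : (k:ℝ)/((1-η)*n) ≤ 1
  · -- Chernoff case
    have hthA : thA η n k = (k:ℝ)/((1-η)*n) := min_eq_left hp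
    have hx : thA η n k ∈ Icc (0:ℝ) 1 := by
      rw [hthA]
      exact ⟨div_nonneg hk0.le (by positivity), hp⟩
    have ht : -(η/3) ≤ (0:ℝ) := by linarith
    refine (chernoff_le hindep hmeas hunif n hx ((k:ℝ) - 1) ht).trans
      (ENNReal.ofReal_le_ofReal (exp_le_exp.2 ?_))
    have hnq : (n:ℝ) * thA η n k * (1-η) = k := by
      rw [hthA]; field_simp
    set Q : ℝ := (n:ℝ) * thA η n k with hQ
    have hQ0 : 0 ≤ Q := mul_nonneg (by positivity) hx.1
    have hnqη : Q * (1-η) * η = (k:ℝ) * η := by rw [hnq]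
    have hQη2 : 0 ≤ Q * η * η := mul_nonneg (mul_nonneg hQ0 hη.le) hη.le
    have hQk : (k:ℝ) * (1+η) ≤ Q := by nlinarith [hnq, hnqη, hQη2]
    have hQ2k : Q ≤ 2*k := by
      nlinarith [hnq, mul_nonneg hQ0 (show (0:ℝ) ≤ 1 - 2*η by linarith)]
    have hE : exp (-(η/3)) - 1 ≤ -(η/3) + η^2/12 := by
      have := exp_quad (y := -(η/3)) (by rw [abs_of_nonpos (by linarith)]; linarith)
      nlinarith
    have hgoal : -(-(η/3)) * ((k:ℝ) - 1) + Q * (exp (-(η/3)) - 1) ≤ -(η^2 * k) / 12 := by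
      have h2 : Q * (exp (-(η/3)) - 1) ≤ Q * (-(η/3) + η^2/12) :=
        mul_le_mul_of_nonneg_left hE hQ0
      have h3 : Q * (-(η/3) + η^2/12) = -(η/3) * Q + (η^2/12) * Q := by ring
      have h4 : -(η/3) * Q ≤ -(η/3) * ((k:ℝ) * (1+η)) := by nlinarith [hQk, hη.le]
      have h5 : (η^2/12) * Q ≤ (η^2/12) * (2*k) := by nlinarith [hQ2k, sq_nonneg η]
      nlinarith [mul_nonneg (sq_nonneg η) hk0.le]
    calc -(-(η/3)) * ((k:ℝ) - 1) + (n:ℝ) * (thA η n k * (exp (-(η/3)) - 1))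
        = -(-(η/3)) * ((k:ℝ) - 1) + Q * (exp (-(η/3)) - 1) := by ring
      _ ≤ -(η^2 * k) / 12 := hgoal
  · -- null case: thA = 1
    push_neg at hp
    have hthA : thA η n k = 1 := min_eq_right hp.le
    have hz : PP (⋃ i : ℕ, {ω | 1 < U i ω}) = 0 := by
      refine measure_iUnion_null fun i => ?_
      have he : {ω | 1 < U i ω} = U i ⁻¹' (Ioi 1) := rfl
      rw [he, ← Measure.map_apply (hmeas i) measurableSet_Ioi, hunif i,
        Measure.restrict_apply measurableSet_Ioi]
      have he2 : Ioi (1:ℝ) ∩ Icc 0 1 = ∅ := by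
        ext u; simp only [mem_inter_iff, mem_Ioi, mem_Icc, mem_empty_iff_false, iff_false]
        rintro ⟨h1, _, h3⟩; linarith
      rw [he2]; simp
    have hsub : badA U η n k ⊆ ⋃ i : ℕ, {ω | 1 < U i ω} := by
      intro ω hω
      by_contra hωn
      simp only [mem_iUnion, mem_setOf_eq, not_exists, not_lt] at hωn
      have hS : S U n (thA η n k) ω = n := by
        rw [hthA]
        unfold S ind
        rw [Finset.sum_congr rfl (fun i _ => if_pos (hωn i))]
        simp
      have hωk : (n:ℝ) ≤ (k:ℝ) - 1 := by
        have h := hω; unfold badA at h; simp only [mem_setOf_eq] at h; rw [hS] at h; exact h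
      linarith
    have hnull : PP (badA U η n k) = 0 := measure_mono_null hsub hz
    rw [hnull]; exact zero_le

lemma summable_aux {c e : ℝ} (hc : 0 < c) (he : 0 < e) :
    Summable (fun n : ℕ => (n:ℝ) * exp (-(c * (n:ℝ) ^ e))) := by
  obtain ⟨m, hm⟩ := exists_nat_gt (3 / e)
  have hsum2 : Summable (fun n : ℕ => ((m.factorial : ℝ) / c ^ m) * (n:ℝ) ^ (-2 : ℝ)) :=
    (Real.summable_nat_rpow.2 (by norm_num)).mul_left _
  refine Summable.of_nonneg_of_le (fun n => by positivity) (fun n => ?_) hsum2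
  rcases Nat.eq_zero_or_pos n with rfl | hn
  · simp [Real.zero_rpow (by norm_num : (-2:ℝ) ≠ 0)]
  have hn0 : (0:ℝ) < n := by exact_mod_cast hn
  have hn1 : (1:ℝ) ≤ n := by exact_mod_cast hn
  set x : ℝ := c * (n:ℝ) ^ e with hx
  have hx0 : 0 < x := by positivity
  have h1 : x ^ m / m.factorial ≤ exp x := by
    calc x ^ m / m.factorial ≤ ∑ i ∈ Finset.range (m+1), x ^ i / i.factorial := by
          refine Finset.single_le_sum (f := fun i => x ^ i / (i.factorial : ℝ))
            (fun i _ => by positivity) (Finset.self_mem_range_succ m)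
      _ ≤ exp x := Real.sum_le_exp_of_nonneg hx0.le _
  have h2 : exp (-x) ≤ m.factorial / x ^ m := by
    rw [exp_neg, ← one_div, div_le_div_iff₀ (exp_pos _) (pow_pos hx0 m), one_mul]
    rw [div_le_iff₀ (by positivity : (0:ℝ) < (m.factorial : ℝ))] at h1
    linarith
  have hxm : x ^ m = c ^ m * (n:ℝ) ^ (e * m) := by
    rw [hx, mul_pow, ← Real.rpow_natCast ((n:ℝ) ^ e) m, ← Real.rpow_mul hn0.le]
  have h3 : (n:ℝ) * exp (-x) ≤ (n:ℝ) * ((m.factorial : ℝ) / x ^ m) :=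
    mul_le_mul_of_nonneg_left h2 hn0.le
  have h4 : (n:ℝ) * ((m.factorial : ℝ) / x ^ m)
      = ((m.factorial : ℝ) / c ^ m) * (n:ℝ) ^ (1 - e * m) := by
    rw [hxm, Real.rpow_sub hn0, Real.rpow_one]
    field_simp
  have h5 : (n:ℝ) ^ (1 - e * m) ≤ (n:ℝ) ^ (-2 : ℝ) := by
    refine Real.rpow_le_rpow_of_exponent_le hn1 ?_
    have : 3 < e * m := by
      rw [div_lt_iff₀ he] at hm; linarith [hm]
    linarith
  calc (n:ℝ) * exp (-x) ≤ ((m.factorial : ℝ) / c ^ m) * (n:ℝ) ^ (1 - e * m) := by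
        rw [← h4]; exact h3
    _ ≤ ((m.factorial : ℝ) / c ^ m) * (n:ℝ) ^ (-2:ℝ) := by
        refine mul_le_mul_of_nonneg_left h5 (by positivity)

def kmin (ε : ℝ) (n : ℕ) : ℕ := max 1 ⌊(n:ℝ) ^ ε⌋₊

def Bad (U : ℕ → Ω → ℝ) (ε η : ℝ) (n : ℕ) : Set Ω :=
  ⋃ k ∈ Finset.Icc (kmin ε n) n, (badA U η n k ∪ badB U η n k)

lemma Bad_bound (hindep : ProbabilityTheory.iIndepFun U PP)
    (hmeas : ∀ i, Measurable (U i))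
    (hunif : ∀ i, PP.map (U i) = volume.restrict (Icc (0:ℝ) 1))
    {η : ℝ} (hη : 0 < η) (hη2 : η ≤ 1/2) {ε : ℝ} (hε : 0 < ε) (n : ℕ) :
    PP (Bad U ε η n) ≤
      ENNReal.ofReal ((2 * exp (η^2/12)) * ((n:ℝ) * exp (-(η^2/12 * (n:ℝ) ^ ε)))) := by
  rcases Nat.eq_zero_or_pos n with rfl | hn
  · -- n = 0 : Icc (kmin ε 0) 0 with kmin ≥ 1 is empty
    have : Finset.Icc (kmin ε 0) 0 = ∅ := by
      apply Finset.Icc_eq_empty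
      simp [kmin]
    simp [Bad, this]
  have hterm : ∀ k ∈ Finset.Icc (kmin ε n) n,
      PP (badA U η n k ∪ badB U η n k) ≤
        ENNReal.ofReal (2 * exp (η^2/12) * exp (-(η^2/12 * (n:ℝ) ^ ε))) := by
    intro k hk
    rw [Finset.mem_Icc] at hk
    have hk1 : 1 ≤ k := le_trans (le_max_left _ _) hk.1
    have hkfl : ⌊(n:ℝ) ^ ε⌋₊ ≤ k := le_trans (le_max_right _ _) hk.1
    have hkR : (n:ℝ) ^ ε - 1 ≤ (k:ℝ) := by
      have h1 : (n:ℝ) ^ ε - 1 < ⌊(n:ℝ) ^ ε⌋₊ := by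
        have := Nat.lt_floor_add_one ((n:ℝ) ^ ε)
        have h0 : (0:ℝ) ≤ (n:ℝ) ^ ε := by positivity
        have := Nat.sub_one_lt_floor ((n:ℝ) ^ ε)
        linarith
      have h2 : (⌊(n:ℝ) ^ ε⌋₊ : ℝ) ≤ k := by exact_mod_cast hkfl
      linarith
    have hexp : exp (-(η^2 * k) / 12) ≤ exp (η^2/12) * exp (-(η^2/12 * (n:ℝ) ^ ε)) := by
      rw [← exp_add]
      refine exp_le_exp.2 ?_
      nlinarith [sq_nonneg η, hkR]
    calc PP (badA U η n k ∪ badB U η n k)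
        ≤ PP (badA U η n k) + PP (badB U η n k) := measure_union_le _ _
      _ ≤ ENNReal.ofReal (exp (-(η^2 * k) / 12)) + ENNReal.ofReal (exp (-(η^2 * k) / 12)) := by
          gcongr
          · exact badA_bound hindep hmeas hunif hη hη2 hn hk1 hk.2
          · exact badB_bound hindep hmeas hunif hη hη2 hn hk1 hk.2
      _ = ENNReal.ofReal (2 * exp (-(η^2 * k) / 12)) := by
          rw [← ENNReal.ofReal_add (exp_pos _).le (exp_pos _).le]; ring_nf
      _ ≤ ENNReal.ofReal (2 * (exp (η^2/12) * exp (-(η^2/12 * (n:ℝ) ^ ε)))) := by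
          refine ENNReal.ofReal_le_ofReal (by linarith [hexp])
      _ = ENNReal.ofReal (2 * exp (η^2/12) * exp (-(η^2/12 * (n:ℝ) ^ ε))) := by ring_nf
  calc PP (Bad U ε η n) ≤ ∑ k ∈ Finset.Icc (kmin ε n) n,
        PP (badA U η n k ∪ badB U η n k) := measure_biUnion_finset_le _ _
    _ ≤ ∑ _k ∈ Finset.Icc (kmin ε n) n,
        ENNReal.ofReal (2 * exp (η^2/12) * exp (-(η^2/12 * (n:ℝ) ^ ε))) :=
        Finset.sum_le_sum hterm
    _ = (Finset.Icc (kmin ε n) n).card •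
        ENNReal.ofReal (2 * exp (η^2/12) * exp (-(η^2/12 * (n:ℝ) ^ ε))) := by
        rw [Finset.sum_const]
    _ ≤ n • ENNReal.ofReal (2 * exp (η^2/12) * exp (-(η^2/12 * (n:ℝ) ^ ε))) := by
        refine nsmul_le_nsmul_left ?_ ?_
        · exact zero_le
        · rw [Nat.card_Icc]
          have : 1 ≤ kmin ε n := le_max_left _ _
          omega
    _ = ENNReal.ofReal ((2 * exp (η^2/12)) * ((n:ℝ) * exp (-(η^2/12 * (n:ℝ) ^ ε)))) := by
        rw [nsmul_eq_mul, ← ENNReal.ofReal_natCast n,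
          ← ENNReal.ofReal_mul (by positivity)]
        ring_nf

lemma ae_not_bad (hindep : ProbabilityTheory.iIndepFun U PP)
    (hmeas : ∀ i, Measurable (U i))
    (hunif : ∀ i, PP.map (U i) = volume.restrict (Icc (0:ℝ) 1))
    {η : ℝ} (hη : 0 < η) (hη2 : η ≤ 1/2) {ε : ℝ} (hε : 0 < ε) :
    ∀ᵐ ω ∂PP, ∀ᶠ n in atTop, ω ∉ Bad U ε η n := by
  refine ae_eventually_notMem ?_
  have hsum : Summable (fun n : ℕ =>
      (2 * exp (η^2/12)) * ((n:ℝ) * exp (-(η^2/12 * (n:ℝ) ^ ε)))) :=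
    (summable_aux (by positivity) hε).mul_left _
  have h1 : (∑' n, PP (Bad U ε η n)) ≤
      ∑' n : ℕ, ENNReal.ofReal ((2 * exp (η^2/12)) * ((n:ℝ) * exp (-(η^2/12 * (n:ℝ) ^ ε)))) :=
    ENNReal.tsum_le_tsum (fun n => Bad_bound hindep hmeas hunif hη hη2 hε n)
  refine ne_top_of_le_ne_top ?_ h1
  rw [← ENNReal.ofReal_tsum_of_nonneg (fun n => by positivity) hsum]
  exact ENNReal.ofReal_ne_top

lemma card_mono (ω : Ω) {x y : ℝ} (h : x ≤ y) (n : ℕ) :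
    ((Finset.range n).filter (fun i => U i ω ≤ x)).card ≤
      ((Finset.range n).filter (fun i => U i ω ≤ y)).card :=
  Finset.card_le_card (by
    intro i hi
    simp only [Finset.mem_filter] at hi ⊢
    exact ⟨hi.1, hi.2.trans h⟩)

lemma det {ω : Ω} {η : ℝ} (hη : 0 < η) (hη2 : η ≤ 1/2) {n k : ℕ}
    (hn : 1 ≤ n) (hk1 : 1 ≤ k) (hkn : k ≤ n)
    (hA : ω ∉ badA U η n k) (hB : ω ∉ badB U η n k) :
    |((n:ℝ)/(k:ℝ)) * orderStat U n k ω - 1| ≤ 2 * η := by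
  have hn0 : (0:ℝ) < n := by exact_mod_cast hn
  have hk0 : (0:ℝ) < k := by exact_mod_cast hk1
  have h1η : (0:ℝ) < 1 - η := by linarith
  have h1η' : (0:ℝ) < 1 + η := by linarith
  set A : Set ℝ := {x : ℝ | k ≤ ((Finset.range n).filter (fun i => U i ω ≤ x)).card} with hAdef
  have hOS : orderStat U n k ω = sInf A := rfl
  -- thA ∈ A
  have hp : thA η n k ∈ A := by
    simp only [hAdef, mem_setOf_eq]
    unfold badA at hA
    simp only [mem_setOf_eq, not_le] at hA
    rw [← card_eq n (thA η n k) ω] at hA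
    by_contra hcon
    push_neg at hcon
    have : (((Finset.range n).filter (fun i => U i ω ≤ thA η n k)).card : ℝ) ≤ (k:ℝ) - 1 := by
      have : ((Finset.range n).filter (fun i => U i ω ≤ thA η n k)).card ≤ k - 1 := by omega
      have h2 := (Nat.cast_le (α := ℝ)).2 this
      push_cast [Nat.cast_sub hk1] at h2 ⊢
      linarith
    linarith
  -- lower bound for A
  have hlb : ∀ x ∈ A, thB η n k ≤ x := by
    intro x hx
    by_contra hlt
    push_neg at hlt
    unfold badB at hB
    simp only [mem_setOf_eq, not_le] at hB
    rw [← card_eq n (thB η n k) ω] at hB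
    have hcard : ((Finset.range n).filter (fun i => U i ω ≤ x)).card ≤
        ((Finset.range n).filter (fun i => U i ω ≤ thB η n k)).card :=
      card_mono ω hlt.le n
    simp only [hAdef, mem_setOf_eq] at hx
    have : (k:ℝ) ≤ (((Finset.range n).filter (fun i => U i ω ≤ x)).card : ℝ) := by
      exact_mod_cast hx
    have h2 : (((Finset.range n).filter (fun i => U i ω ≤ x)).card : ℝ) ≤
        (((Finset.range n).filter (fun i => U i ω ≤ thB η n k)).card : ℝ) := by
      exact_mod_cast hcard
    linarith
  have h1 : orderStat U n k ω ≤ thA η n k := by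
    rw [hOS]; exact csInf_le ⟨thB η n k, hlb⟩ hp
  have h2 : thB η n k ≤ orderStat U n k ω := by
    rw [hOS]; exact le_csInf ⟨thA η n k, hp⟩ hlb
  have hub : ((n:ℝ)/(k:ℝ)) * orderStat U n k ω ≤ 1/(1-η) := by
    have hA1 : thA η n k ≤ (k:ℝ)/((1-η)*n) := min_le_left _ _
    have : ((n:ℝ)/(k:ℝ)) * orderStat U n k ω ≤ ((n:ℝ)/(k:ℝ)) * ((k:ℝ)/((1-η)*n)) := by
      refine mul_le_mul_of_nonneg_left (h1.trans hA1) (by positivity)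
    calc ((n:ℝ)/(k:ℝ)) * orderStat U n k ω ≤ ((n:ℝ)/(k:ℝ)) * ((k:ℝ)/((1-η)*n)) := this
      _ = 1/(1-η) := by field_simp
  have hlb2 : 1/(1+η) ≤ ((n:ℝ)/(k:ℝ)) * orderStat U n k ω := by
    have : ((n:ℝ)/(k:ℝ)) * thB η n k ≤ ((n:ℝ)/(k:ℝ)) * orderStat U n k ω :=
      mul_le_mul_of_nonneg_left h2 (by positivity)
    calc (1:ℝ)/(1+η) = ((n:ℝ)/(k:ℝ)) * thB η n k := by unfold thB; field_simp
      _ ≤ ((n:ℝ)/(k:ℝ)) * orderStat U n k ω := this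
  rw [abs_le]
  constructor
  · have : -(η/(1+η)) ≤ ((n:ℝ)/(k:ℝ)) * orderStat U n k ω - 1 := by
      have : 1/(1+η) - 1 = -(η/(1+η)) := by field_simp; ring
      linarith
    have hq : η/(1+η) ≤ 2*η := by
      rw [div_le_iff₀ h1η']; nlinarith
    linarith
  · have h3 : ((n:ℝ)/(k:ℝ)) * orderStat U n k ω - 1 ≤ 1/(1-η) - 1 := by linarith
    have h4 : 1/(1-η) - 1 = η/(1-η) := by field_simp; ring
    have hq : η/(1-η) ≤ 2*η := by
      rw [div_le_iff₀ h1η]; nlinarith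
    linarith

end OSaux
end OSauxSec

/-- uniform a.s. convergence of intermediate order statistics of i.i.d.
uniform random variables: `sup_{θ∈[ε,1-ε]} |(n/k_{n,θ}) U_{k_{n,θ}:n} − 1| → 0` a.s. -/
theorem uniform_order_statistics_consistency
    {Ω : Type*} [MeasurableSpace Ω] (PP : Measure Ω) [IsProbabilityMeasure PP]
    (U : ℕ → Ω → ℝ) (hmeas : ∀ i, Measurable (U i))
    (hindep : ProbabilityTheory.iIndepFun U PP)
    (hunif : ∀ i, PP.map (U i) = volume.restrict (Icc (0:ℝ) 1))
    (ε : ℝ) (hε : 0 < ε) (hε' : ε < 1 / 2) :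
    ∀ᵐ ω ∂PP, Tendsto (fun n : ℕ =>
        ⨆ θ : Icc ε (1 - ε),
          |((n : ℝ) / (⌊(n : ℝ) ^ (1 - (θ : ℝ))⌋₊ : ℝ)) *
              orderStat U n ⌊(n : ℝ) ^ (1 - (θ : ℝ))⌋₊ ω - 1|)
      atTop (𝓝 0) := by
  classical
  have hG : ∀ᵐ ω ∂PP, ∀ i, U i ω ∈ Icc (0:ℝ) 1 := by
    rw [ae_all_iff]
    intro i
    refine (MeasureTheory.ae_iff).2 ?_
    have he : {ω | ¬ U i ω ∈ Icc (0:ℝ) 1} = U i ⁻¹' (Icc (0:ℝ) 1)ᶜ := rfl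
    rw [he, ← Measure.map_apply (hmeas i) measurableSet_Icc.compl, hunif i,
      Measure.restrict_apply measurableSet_Icc.compl]
    simp
  have hBC : ∀ᵐ ω ∂PP, ∀ m : ℕ, ∀ᶠ n in atTop, ω ∉ OSaux.Bad U ε (1/((m:ℝ)+2)) n := by
    rw [ae_all_iff]
    intro m
    have hηm : (0:ℝ) < 1/((m:ℝ)+2) := by positivity
    have hηm2 : 1/((m:ℝ)+2) ≤ 1/2 := by
      rw [div_le_div_iff₀ (by positivity) (by norm_num)]
      have : (0:ℝ) ≤ (m:ℝ) := Nat.cast_nonneg m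
      linarith
    exact OSaux.ae_not_bad hindep hmeas hunif hηm hηm2 hε
  filter_upwards [hG, hBC] with ω hGω hBCω
  have hεle : ε ≤ 1 - ε := by linarith
  haveI hne : Nonempty ↥(Icc ε (1 - ε)) := ⟨⟨ε, left_mem_Icc.2 hεle⟩⟩
  rw [NormedAddCommGroup.tendsto_nhds_zero]
  intro δ hδ
  obtain ⟨m, hm⟩ := exists_nat_gt (2 / δ)
  have hmpos : (0:ℝ) < (m:ℝ) + 2 := by positivity
  set η : ℝ := 1/((m:ℝ)+2) with hηdef
  have hη : 0 < η := by positivity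
  have hη2 : η ≤ 1/2 := by
    rw [hηdef, div_le_div_iff₀ hmpos (by norm_num)]
    have : (0:ℝ) ≤ (m:ℝ) := Nat.cast_nonneg m
    linarith
  have h2η : 2 * η < δ := by
    rw [hηdef, mul_one_div, div_lt_iff₀ hmpos]
    rw [div_lt_iff₀ hδ] at hm
    nlinarith [hδ.le]
  filter_upwards [hBCω m, eventually_ge_atTop 1] with n hnb hn1
  have hn1R : (1:ℝ) ≤ (n:ℝ) := by exact_mod_cast hn1
  have hbound : ∀ θ : ↥(Icc ε (1 - ε)),
      |((n : ℝ) / (⌊(n : ℝ) ^ (1 - (θ : ℝ))⌋₊ : ℝ)) *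
          orderStat U n ⌊(n : ℝ) ^ (1 - (θ : ℝ))⌋₊ ω - 1| ≤ 2 * η := by
    intro θ
    obtain ⟨hθ1, hθ2⟩ := θ.2
    set k := ⌊(n : ℝ) ^ (1 - (θ : ℝ))⌋₊ with hk
    have hk1 : 1 ≤ k := by
      refine Nat.le_floor ?_
      push_cast
      calc (1:ℝ) = (n:ℝ) ^ (0:ℝ) := (Real.rpow_zero _).symm
        _ ≤ (n:ℝ) ^ (1 - (θ:ℝ)) :=
            Real.rpow_le_rpow_of_exponent_le hn1R (by linarith)
    have hkn : k ≤ n := by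
      have h := Real.rpow_le_rpow_of_exponent_le hn1R
        (show 1 - (θ:ℝ) ≤ 1 by linarith)
      rw [Real.rpow_one] at h
      calc k ≤ ⌊(n:ℝ)⌋₊ := Nat.floor_le_floor h
        _ = n := Nat.floor_natCast n
    have hkmin : OSaux.kmin ε n ≤ k := by
      refine max_le hk1 (Nat.floor_le_floor ?_)
      exact Real.rpow_le_rpow_of_exponent_le hn1R (by linarith)
    have hmem : k ∈ Finset.Icc (OSaux.kmin ε n) n := Finset.mem_Icc.2 ⟨hkmin, hkn⟩
    have hnotin : ω ∉ OSaux.badA U η n k ∪ OSaux.badB U η n k := fun hcon =>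
      hnb (Set.mem_biUnion hmem hcon)
    rw [Set.mem_union] at hnotin
    push_neg at hnotin
    exact OSaux.det hη hη2 hn1 hk1 hkn hnotin.1 hnotin.2
  have hbdd : BddAbove (Set.range (fun θ : ↥(Icc ε (1 - ε)) =>
      |((n : ℝ) / (⌊(n : ℝ) ^ (1 - (θ : ℝ))⌋₊ : ℝ)) *
          orderStat U n ⌊(n : ℝ) ^ (1 - (θ : ℝ))⌋₊ ω - 1|)) := by
    refine ⟨2 * η, ?_⟩
    rintro y ⟨θ, rfl⟩
    exact hbound θ
  have hsup_le : (⨆ θ : ↥(Icc ε (1 - ε)),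
      |((n : ℝ) / (⌊(n : ℝ) ^ (1 - (θ : ℝ))⌋₊ : ℝ)) *
          orderStat U n ⌊(n : ℝ) ^ (1 - (θ : ℝ))⌋₊ ω - 1|) ≤ 2 * η := ciSup_le hbound
  have hsup_nonneg : 0 ≤ ⨆ θ : ↥(Icc ε (1 - ε)),
      |((n : ℝ) / (⌊(n : ℝ) ^ (1 - (θ : ℝ))⌋₊ : ℝ)) *
          orderStat U n ⌊(n : ℝ) ^ (1 - (θ : ℝ))⌋₊ ω - 1| :=
    le_trans (abs_nonneg _) (le_ciSup hbdd (Classical.arbitrary _))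
  rw [Real.norm_eq_abs, abs_of_nonneg hsup_nonneg]
  exact lt_of_le_of_lt hsup_le h2η

end
end
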